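/- Let F be a field and let H1 and H2 be groups. Let τ1 : H1 → Aut_F(W1) be an irreducible finite-dimensional linear representation of H1 over F, and let τ2 : H2 → Aut_F(W2) be an absolutely irreducible finite-dimensional linear representation of H2 over F. Then the linear representation of H1 × H2 on the F-vector space Hom_F(W2, W1), given by (h1, h2) · ψ = τ1(h1) ∘ ψ ∘ τ2(h2)⁻¹, is irreducible. -/

import Mathlib

open Function Module
open scoped TensorProduct

universe u v w x y

/-- A linear representation `τ : H →* Aut_F(W)` is *irreducible* if `W ≠ 0` and the only
`H`-invariant `F`-subspaces of `W` are `0` and `W`. -/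
def RepIsIrreducible {F : Type u} [Field F] {H : Type v} [Group H]
    {W : Type w} [AddCommGroup W] [Module F W] (τ : Representation F H W) : Prop :=
  Nontrivial W ∧
    ∀ p : Submodule F W, (∀ h : H, ∀ w ∈ p, τ h w ∈ p) → p = ⊥ ∨ p = ⊤

/-- A linear representation is *absolutely irreducible* if it remains irreducible after
extension of scalars to every field extension `E` of `F`. -/
def RepIsAbsolutelyIrreducible {F : Type u} [Field F] {H : Type v} [Group H]
    {W : Type w} [AddCommGroup W] [Module F W] (τ : Representation F H W) : Prop :=
  ∀ (E : Type u) [Field E] [Algebra F E],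
    Nontrivial (E ⊗[F] W) ∧
      ∀ p : Submodule E (E ⊗[F] W),
        (∀ h : H, ∀ x ∈ p, LinearMap.baseChange E (τ h) x ∈ p) → p = ⊥ ∨ p = ⊤

/-- Rank-one operators span the hom space. -/
lemma rankOne_span {K : Type*} [Field K] {V W : Type*} [AddCommGroup V] [Module K V]
    [AddCommGroup W] [Module K W] [FiniteDimensional K V]
    (p : Submodule K (V →ₗ[K] W))
    (h : ∀ (f : V →ₗ[K] K) (w : W), f.smulRight w ∈ p) : p = ⊤ := by
  rw [eq_top_iff]
  intro φ _
  classical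
  set b := Module.finBasis K V with hb
  have hφ : φ = ∑ i, ((b.coord i).smulRight (φ (b i))) := by
    ext v
    simp only [LinearMap.coe_sum, Finset.sum_apply, LinearMap.smulRight_apply,
      Module.Basis.coord_apply, ← map_smul, ← map_sum, Module.Basis.sum_repr]
  rw [hφ]
  exact Submodule.sum_mem _ fun i _ => h _ _

/-- **Burnside's theorem**: over an algebraically closed field, a subalgebra of endomorphisms
acting irreducibly on a nonzero finite-dimensional space is the whole endomorphism algebra. -/
lemma burnside {K : Type*} [Field K] [IsAlgClosed K] {V : Type*} [AddCommGroup V] [Module K V]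
    [FiniteDimensional K V] [Nontrivial V] (A : Subalgebra K (Module.End K V))
    (hA : ∀ p : Submodule K V, (∀ a ∈ A, ∀ v ∈ p, a v ∈ p) → p = ⊥ ∨ p = ⊤) :
    A = ⊤ := by
  classical
  -- transitivity of the action
  have htrans : ∀ v : V, v ≠ 0 → ∀ w : V, ∃ a ∈ A, a v = w := by
    intro v hv w
    set O : Submodule K V :=
      (Subalgebra.toSubmodule A).map (LinearMap.applyₗ (R := K) v) with hO
    have hmem : ∀ x : V, x ∈ O ↔ ∃ a ∈ A, a v = x := by
      intro x
      simp [hO, Submodule.mem_map, LinearMap.applyₗ]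
      exact Iff.rfl
    have hinv : ∀ b ∈ A, ∀ x ∈ O, b x ∈ O := by
      intro b hb x hx
      obtain ⟨a, ha, rfl⟩ := (hmem x).mp hx
      exact (hmem _).mpr ⟨b * a, mul_mem hb ha, rfl⟩
    rcases hA O (fun a ha x hx => hinv a ha x hx) with h | h
    · exfalso
      have : v ∈ O := (hmem v).mpr ⟨1, one_mem A, rfl⟩
      rw [h, Submodule.mem_bot] at this
      exact hv this
    · exact (hmem w).mp (h ▸ Submodule.mem_top)
  -- a nonzero element of minimal rank
  obtain ⟨v0, hv0⟩ := exists_ne (0 : V)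
  have hone : (1 : Module.End K V) ≠ 0 := by
    intro h
    apply hv0
    have := congrArg (fun f : Module.End K V => f v0) h
    simpa using this
  have hPex : ∃ n, ∃ T ∈ A, T ≠ 0 ∧ finrank K (LinearMap.range T) = n :=
    ⟨_, 1, one_mem A, hone, rfl⟩
  obtain ⟨T, hTA, hT0, hTrank⟩ := Nat.find_spec hPex
  have hTpos : 0 < finrank K (LinearMap.range T) := by
    rcases Nat.eq_zero_or_pos (finrank K (LinearMap.range T)) with h | h
    · exact absurd (LinearMap.range_eq_bot.mp (Submodule.finrank_eq_zero.mp h)) hT0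
    · exact h
  -- T has rank one
  have hrank1 : finrank K (LinearMap.range T) = 1 := by
    by_contra hne
    have h2 : 2 ≤ finrank K (LinearMap.range T) := by omega
    obtain ⟨u, hu⟩ : ∃ u, T u ≠ 0 := by
      by_contra h
      push_neg at h
      exact hT0 (LinearMap.ext fun v => by simpa using h v)
    obtain ⟨w, hw⟩ : ∃ w, T w ∉ (Submodule.span K {T u} : Submodule K V) := by
      by_contra h
      push_neg at h
      have hle : LinearMap.range T ≤ Submodule.span K {T u} := by
        rintro _ ⟨x, rfl⟩; exact h x
      have := Submodule.finrank_mono hle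
      rw [finrank_span_singleton hu] at this
      omega
    obtain ⟨S, hS, hSTu⟩ := htrans (T u) hu w
    -- eigenvalue of T∘S on range T
    have hmapsTo : ∀ x ∈ LinearMap.range T, (T ∘ₗ S) x ∈ LinearMap.range T :=
      fun x _ => LinearMap.mem_range_self T (S x)
    haveI : Nontrivial (LinearMap.range T) :=
      Submodule.nontrivial_iff_ne_bot.mpr (fun h => hT0 (LinearMap.range_eq_bot.mp h))
    obtain ⟨μ, hμ⟩ := Module.End.exists_eigenvalue ((T ∘ₗ S).restrict hmapsTo)
    obtain ⟨x, hx⟩ := hμ.exists_hasEigenvector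
    have hxval : T (S (x : V)) = μ • (x : V) := by
      have h1 : ((T ∘ₗ S).restrict hmapsTo) x = μ • x := hx.apply_eq_smul
      have := congrArg (Subtype.val) h1
      simpa [LinearMap.restrict_apply] using this
    set f : Module.End K V := T * S - μ • 1 with hf
    set T' : Module.End K V := f * T with hT'
    have hT'A : T' ∈ A :=
      mul_mem (sub_mem (mul_mem hTA hS) (Subalgebra.smul_mem A (one_mem A) μ)) hTA
    have hT'0 : T' ≠ 0 := by
      intro h
      apply hw
      have : T' u = 0 := by rw [h]; rfl
      have h2 : T (S (T u)) - μ • T u = 0 := by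
        simpa [hT', hf, Module.End.mul_apply, LinearMap.sub_apply,
          LinearMap.smul_apply, Module.End.one_apply] using this
      rw [hSTu] at h2
      have : T w = μ • T u := by
        rwa [sub_eq_zero] at h2
      rw [this]
      exact Submodule.smul_mem _ μ (Submodule.mem_span_singleton_self _)
    -- rank T' < rank T
    set j : LinearMap.range T →ₗ[K] V := f ∘ₗ (LinearMap.range T).subtype with hj
    have hrangej : LinearMap.range j = Submodule.map f (LinearMap.range T) := by
      rw [hj, LinearMap.range_comp, Submodule.range_subtype]
    have hkerj : LinearMap.ker j ≠ ⊥ := by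
      intro h
      have hxker : x ∈ LinearMap.ker j := by
        simp only [hj, LinearMap.mem_ker, LinearMap.comp_apply, Submodule.subtype_apply]
        simp [hf, Module.End.mul_apply, LinearMap.sub_apply, LinearMap.smul_apply,
          Module.End.one_apply, hxval]
      rw [h, Submodule.mem_bot] at hxker
      exact hx.right hxker
    have hkerpos : 0 < finrank K (LinearMap.ker j) := by
      rcases Nat.eq_zero_or_pos (finrank K (LinearMap.ker j)) with h | h
      · exact absurd (Submodule.finrank_eq_zero.mp h) hkerj
      · exact h
    have hrn := LinearMap.finrank_range_add_finrank_ker j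
    have hrangeT' : LinearMap.range T' = Submodule.map f (LinearMap.range T) := by
      rw [hT', Module.End.mul_eq_comp, LinearMap.range_comp]
    have hlt : finrank K (LinearMap.range T') < finrank K (LinearMap.range T) := by
      rw [hrangeT', ← hrangej]
      have : finrank K (LinearMap.range T) = finrank K (LinearMap.range T) := rfl
      omega
    exact Nat.find_min hPex (hTrank ▸ hlt) ⟨T', hT'A, hT'0, rfl⟩
  -- T is a rank-one operator: T v = f0 v • y
  obtain ⟨u, hu⟩ : ∃ u, T u ≠ 0 := by
    by_contra h
    push_neg at h
    exact hT0 (LinearMap.ext fun v => by simpa using h v)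
  set y : V := T u with hy
  have hy0 : y ≠ 0 := hu
  have hspan : Submodule.span K {y} = LinearMap.range T := by
    apply Submodule.eq_of_le_of_finrank_eq
    · rw [Submodule.span_le, Set.singleton_subset_iff]
      exact LinearMap.mem_range_self T u
    · rw [finrank_span_singleton hy0, hrank1]
  have hTmem : ∀ v, T v ∈ Submodule.span K {y} := fun v =>
    hspan ▸ LinearMap.mem_range_self T v
  obtain ⟨l, hl⟩ : ∃ l : V →ₗ[K] K, l y ≠ 0 := by
    by_contra h
    push_neg at h
    exact hy0 ((Module.forall_dual_apply_eq_zero_iff K y).mp h)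
  set f0 : V →ₗ[K] K := (l y)⁻¹ • (l ∘ₗ T) with hf0def
  have hf0 : ∀ v, T v = f0 v • y := by
    intro v
    obtain ⟨c, hc⟩ := Submodule.mem_span_singleton.mp (hTmem v)
    have : f0 v = c := by
      simp only [hf0def, LinearMap.smul_apply, LinearMap.comp_apply, smul_eq_mul, ← hc,
        map_smul]
      field_simp
    rw [this, hc]
  have hf0u : f0 u ≠ 0 := by
    intro h
    apply hu
    rw [hy, hf0 u, h, zero_smul]
  -- the A-orbit of f0 in the dual space is everything
  set D : Submodule K (Module.Dual K V) :=
    (Subalgebra.toSubmodule A).map (LinearMap.llcomp K V V K f0) with hD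
  have hDmem : ∀ g : Module.Dual K V, g ∈ D ↔ ∃ S ∈ A, f0 ∘ₗ S = g := by
    intro g
    simp only [hD, Submodule.mem_map, Subalgebra.mem_toSubmodule]
    constructor
    · rintro ⟨S, hS, rfl⟩; exact ⟨S, hS, rfl⟩
    · rintro ⟨S, hS, rfl⟩; exact ⟨S, hS, rfl⟩
  have hcoann : D.dualCoannihilator = ⊥ := by
    have hinvq : ∀ a ∈ A, ∀ v ∈ D.dualCoannihilator, a v ∈ D.dualCoannihilator := by
      intro a ha v hv
      rw [Submodule.mem_dualCoannihilator] at hv ⊢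
      intro φ hφ
      obtain ⟨S, hSA, rfl⟩ := (hDmem φ).mp hφ
      have : f0 ∘ₗ (S * a) ∈ D := (hDmem _).mpr ⟨S * a, mul_mem hSA ha, rfl⟩
      simpa [Module.End.mul_apply] using hv _ this
    rcases hA D.dualCoannihilator hinvq with h | h
    · exact h
    · exfalso
      have : u ∈ D.dualCoannihilator := h ▸ Submodule.mem_top
      rw [Submodule.mem_dualCoannihilator] at this
      exact hf0u (by simpa using this f0 ((hDmem f0).mpr ⟨1, one_mem A, by ext v; simp⟩))
  have hDtop : D = ⊤ := by
    apply Submodule.eq_top_of_finrank_eq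
    have := Subspace.finrank_add_finrank_dualCoannihilator_eq D
    rw [hcoann, finrank_bot] at this
    rw [Subspace.dual_finrank_eq]
    omega
  -- conclude: every rank-one operator is in A, hence A = ⊤
  have hrk1 : ∀ (g : V →ₗ[K] K) (z : V), g.smulRight z ∈ A := by
    intro g z
    rcases eq_or_ne z 0 with rfl | hz
    · have : g.smulRight (0 : V) = 0 := by ext v; simp
      rw [this]; exact zero_mem A
    obtain ⟨S', hS', hgS'⟩ := (hDmem g).mp (hDtop ▸ Submodule.mem_top)
    obtain ⟨S'', hS'', hS''y⟩ := htrans y hy0 z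
    have : S'' * T * S' = g.smulRight z := by
      ext v
      rw [← hgS', ← hS''y]
      simp only [Module.End.mul_apply, LinearMap.smulRight_apply, LinearMap.comp_apply]
      rw [hf0 (S' v), map_smul]
    rw [← this]
    exact mul_mem (mul_mem hS'' hTA) hS'
  have : Subalgebra.toSubmodule A = ⊤ := rankOne_span _ fun f w => hrk1 f w
  rwa [Algebra.toSubmodule_eq_top] at this

set_option maxHeartbeats 4000000 in
set_option synthInstance.maxHeartbeats 1000000 in
/-- If the base-changed image of a space of endomorphisms spans everything, the space was
everything. -/
lemma span_baseChange_top {F : Type*} [Field F] {E : Type*} [Field E] [Algebra F E]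
    {W2 : Type*} [AddCommGroup W2] [Module F W2] [FiniteDimensional F W2]
    (S : Submodule F (W2 →ₗ[F] W2))
    (hsp : Submodule.span E
      {g : Module.End E (E ⊗[F] W2) | ∃ s ∈ S, LinearMap.baseChange E s = g} = ⊤) :
    S = ⊤ := by
  obtain ⟨ι, hι⟩ : ∃ ι : E ⊗[F] ↥S →ₗ[E] Module.End E (E ⊗[F] W2),
      ∀ s : ↥S, ι ((1 : E) ⊗ₜ[F] s) = LinearMap.baseChange E (s : W2 →ₗ[F] W2) := by
    refine ⟨(LinearMap.tensorProduct F E W2 W2) ∘ₗ (LinearMap.baseChange E S.subtype),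
      fun s => ?_⟩
    simp [LinearMap.baseChange_tmul, LinearMap.tensorProduct_apply, TensorProduct.liftAux_tmul]
  have hsurj : LinearMap.range ι = ⊤ := by
    rw [← top_le_iff, ← hsp, Submodule.span_le]
    rintro g ⟨s, hs, rfl⟩
    exact ⟨(1 : E) ⊗ₜ ⟨s, hs⟩, hι ⟨s, hs⟩⟩
  have hle : finrank E (Module.End E (E ⊗[F] W2)) ≤ finrank E (E ⊗[F] ↥S) := by
    haveI hfd : FiniteDimensional E (E ⊗[F] ↥S) := inferInstance
    have h0 := LinearMap.finrank_range_add_finrank_ker (K := E) (V := E ⊗[F] ↥S)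
      (V₂ := Module.End E (E ⊗[F] W2)) ι
    have h1 : finrank E ↥(LinearMap.range ι) = finrank E (Module.End E (E ⊗[F] W2)) := by
      rw [hsurj]
      exact finrank_top _ _
    omega
  have h1 : finrank E (E ⊗[F] ↥S) = finrank F ↥S := Module.finrank_baseChange
  have h2 : finrank E (Module.End E (E ⊗[F] W2)) = finrank F (W2 →ₗ[F] W2) := by
    rw [Module.finrank_linearMap, Module.finrank_linearMap, Module.finrank_baseChange]
  have h3 : finrank F ↥S ≤ finrank F (W2 →ₗ[F] W2) := Submodule.finrank_le S
  apply Submodule.eq_top_of_finrank_eq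
  omega

/-- Absolute irreducibility implies the span of the image is all of `End F W2`. -/
lemma span_tau_eq_top {F : Type u} [Field F] {H2 : Type w} [Group H2]
    {W2 : Type y} [AddCommGroup W2] [Module F W2] [FiniteDimensional F W2]
    (τ2 : Representation F H2 W2) (E : Type u) [Field E] [Algebra F E] [IsAlgClosed E]
    (hτ2 : RepIsAbsolutelyIrreducible τ2) :
    Submodule.span F (Set.range fun h : H2 => (τ2 h : W2 →ₗ[F] W2)) = ⊤ := by
  classical
  haveI : Nontrivial (E ⊗[F] W2) := (hτ2 E).1
  let ρ : Representation E H2 (E ⊗[F] W2) :=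
    { toFun := fun h => LinearMap.baseChange E (τ2 h)
      map_one' := by
        show LinearMap.baseChange E (τ2 1) = 1
        rw [_root_.map_one τ2]
        exact LinearMap.baseChange_one F W2
      map_mul' := fun g h => by
        show LinearMap.baseChange E (τ2 (g * h)) = LinearMap.baseChange E (τ2 g) * LinearMap.baseChange E (τ2 h)
        rw [_root_.map_mul τ2]
        exact LinearMap.baseChange_mul _ _ }
  have hρ : ∀ h : H2, ρ h = LinearMap.baseChange E (τ2 h) := fun _ => rfl
  -- Burnside over E
  set A : Subalgebra E (Module.End E (E ⊗[F] W2)) := Algebra.adjoin E (Set.range ρ) with hA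
  have hAtop : A = ⊤ := by
    apply burnside
    intro p hp
    apply (hτ2 E).2 p
    intro h x hx
    have : ρ h ∈ A := Algebra.subset_adjoin (Set.mem_range_self h)
    exact hp (ρ h) this x hx
  -- hence the E-span of the image of ρ is everything
  have hclosure : Submonoid.closure (Set.range ρ) = MonoidHom.mrange (ρ : H2 →* Module.End E (E ⊗[F] W2)) := by
    rw [← MonoidHom.coe_mrange]
    exact Submonoid.closure_eq _
  have hspanE : Submodule.span E (Set.range ρ) = ⊤ := by
    have h1 := Algebra.adjoin_eq_span E (Set.range ρ)
    rw [hclosure] at h1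
    rw [← hA] at h1
    rw [hAtop] at h1
    simpa [MonoidHom.coe_mrange] using h1.symm
  apply span_baseChange_top (E := E)
  rw [← top_le_iff, ← hspanE, Submodule.span_le]
  rintro _ ⟨h, rfl⟩
  apply Submodule.subset_span
  exact ⟨τ2 h, Submodule.subset_span (Set.mem_range_self h), (hρ h).symm⟩

/-- If `τ1 : H1 → Aut_F(W1)` is an irreducible finite-dimensional representation over `F` and
`τ2 : H2 → Aut_F(W2)` is an absolutely irreducible finite-dimensional representation over `F`,
then the representation of `H1 × H2` on `Hom_F(W2, W1)` given by
`(h1, h2) · ψ = τ1 h1 ∘ ψ ∘ τ2 h2⁻¹` is irreducible. -/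
theorem hom_rep_irreducible' {F : Type u} [Field F]
    {H1 : Type v} [Group H1] {H2 : Type w} [Group H2]
    {W1 : Type x} [AddCommGroup W1] [Module F W1] [FiniteDimensional F W1]
    {W2 : Type y} [AddCommGroup W2] [Module F W2] [FiniteDimensional F W2]
    (τ1 : Representation F H1 W1) (τ2 : Representation F H2 W2)
    (hτ1 : RepIsIrreducible τ1) (hτ2 : RepIsAbsolutelyIrreducible τ2) :
    Nontrivial (W2 →ₗ[F] W1) ∧
      ∀ p : Submodule F (W2 →ₗ[F] W1),
        (∀ (h1 : H1) (h2 : H2), ∀ ψ ∈ p, (τ1 h1) ∘ₗ ψ ∘ₗ (τ2 h2⁻¹) ∈ p) →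
          p = ⊥ ∨ p = ⊤ := by

  classical
  obtain ⟨hW1, hirr1⟩ := hτ1
  haveI : Nontrivial W1 := hW1
  haveI hW2 : Nontrivial W2 := by
    haveI := (hτ2 F).1
    exact (TensorProduct.lid F W2).symm.toEquiv.nontrivial
  have hspan := span_tau_eq_top τ2 (AlgebraicClosure F) hτ2
  constructor
  · obtain ⟨w1, hw1⟩ := exists_ne (0 : W1)
    obtain ⟨w2, hw2⟩ := exists_ne (0 : W2)
    obtain ⟨f, hf⟩ : ∃ f : W2 →ₗ[F] F, f w2 ≠ 0 := by
      by_contra h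
      push_neg at h
      exact hw2 ((Module.forall_dual_apply_eq_zero_iff F w2).mp h)
    refine ⟨f.smulRight w1, 0, fun hc => ?_⟩
    have h0 : f w2 • w1 = 0 := by
      have := congrArg (fun g : W2 →ₗ[F] W1 => g w2) hc
      simpa using this
    exact hw1 ((smul_eq_zero.mp h0).resolve_left hf)
  intro p hp
  by_cases hbot : p = ⊥
  · exact Or.inl hbot
  right
  have hright : ∀ ψ ∈ p, ∀ B : W2 →ₗ[F] W2, ψ ∘ₗ B ∈ p := by
    intro ψ hψ B
    have hq : (⊤ : Submodule F (W2 →ₗ[F] W2)) ≤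
        p.comap (LinearMap.llcomp F W2 W2 W1 ψ) := by
      rw [← hspan, Submodule.span_le]
      rintro _ ⟨h, rfl⟩
      simp only [SetLike.mem_coe, Submodule.mem_comap]
      have h1 : (LinearMap.llcomp F W2 W2 W1 ψ) (τ2 h) = ψ ∘ₗ (τ2 h) := rfl
      rw [h1]
      have := hp 1 h⁻¹ ψ hψ
      simpa [inv_inv, Module.End.one_eq_id] using this
    have := hq (Submodule.mem_top (x := B))
    exact this
  have hleft : ∀ ψ ∈ p, ∀ h1 : H1, τ1 h1 ∘ₗ ψ ∈ p := by
    intro ψ hψ h1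
    have := hp h1 1 ψ hψ
    simpa [Module.End.one_eq_id] using this
  obtain ⟨ψ, hψp, hψ0⟩ := Submodule.exists_mem_ne_zero_of_ne_bot hbot
  obtain ⟨w2, hw2ψ⟩ : ∃ w2, ψ w2 ≠ 0 := by
    by_contra h
    push_neg at h
    exact hψ0 (LinearMap.ext fun v => by simpa using h v)
  let q : Submodule F W1 :=
    { carrier := {w | ∀ f : W2 →ₗ[F] F, f.smulRight w ∈ p}
      add_mem' := by
        intro a b ha hb f
        have h1 : f.smulRight (a + b) = f.smulRight a + f.smulRight b := by
          ext v; simp [smul_add]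
        rw [h1]; exact Submodule.add_mem p (ha f) (hb f)
      zero_mem' := by
        intro f
        have h1 : f.smulRight (0 : W1) = 0 := by ext v; simp
        rw [h1]; exact p.zero_mem
      smul_mem' := by
        intro c w hw f
        have h1 : f.smulRight (c • w) = c • f.smulRight w := by
          ext v
          simp only [LinearMap.smulRight_apply, LinearMap.smul_apply]
          rw [smul_comm]
        rw [h1]; exact p.smul_mem c (hw f) }
  have hqinv : ∀ h : H1, ∀ w ∈ q, τ1 h w ∈ q := by
    intro h w hw f
    have h1 : f.smulRight (τ1 h w) = τ1 h ∘ₗ f.smulRight w := by ext v; simp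
    rw [h1]; exact hleft _ (hw f) h
  have hw1q : ψ w2 ∈ q := by
    intro f
    have h1 : f.smulRight (ψ w2) = ψ ∘ₗ f.smulRight w2 := by ext v; simp
    rw [h1]; exact hright ψ hψp _
  have hqtop : q = ⊤ := by
    rcases hirr1 q hqinv with h | h
    · exfalso
      apply hw2ψ
      rw [h] at hw1q
      simpa using hw1q
    · exact h
  apply rankOne_span
  intro f w
  have hwq : w ∈ q := hqtop ▸ Submodule.mem_top
  exact hwq f
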